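/- In the open facility set F* produced by the algorithm, there is at most one open facility x_j in F* with D(x_j, x_i) <= r_j, for any fixed point x_i. Formally: if F* ⊆ X satisfies (a) any two members of F* in the same class V_k are non-adjacent, i.e., D(x_j, x_l) > r_j + r_l for x_j, x_l in F* ∩ V_k with j ≠ l, and (b) for any x_j, x_l in F* in different classes with r_j < r_l, D(x_j, x_l) > 2*r_l, then for any x_i there is at most one x_j in F* with D(x_j, x_i) <= r_j. -/
import Mathlib


open Finset

/-- At most one open facility `xⱼ ∈ F*` satisfies `D(xⱼ,xᵢ) ≤ rⱼ`, given that
(a) members of `F*` in the same class are non-adjacent (`D > rⱼ + r_l`), and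
(b) members of `F*` in different classes with `rⱼ < r_l` satisfy `D > 2 r_l`.
(Points in different classes have different radii, since classes are radius ranges.) -/
theorem at_most_one_covering_facility {X : Type*} [Fintype X] [MetricSpace X]
    (r : X → ℝ) (hr : ∀ i, 0 ≤ r i) (V : X → ℕ)
    (hclass : ∀ a b : X, V a ≠ V b → r a ≠ r b)
    (F : Finset X)
    (ha : ∀ j ∈ F, ∀ l ∈ F, j ≠ l → V j = V l → dist j l > r j + r l)
    (hb : ∀ j ∈ F, ∀ l ∈ F, V j ≠ V l → r j < r l → dist j l > 2 * r l)
    (i : X) :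
    ∀ j ∈ F, ∀ l ∈ F, dist j i ≤ r j → dist l i ≤ r l → j = l := by
  intro j hj l hl hji hli
  by_contra hne
  have htri : dist j l ≤ r j + r l := by
    calc dist j l ≤ dist j i + dist i l := dist_triangle j i l
    _ ≤ r j + r l := by rw [dist_comm i l]; linarith
  by_cases hV : V j = V l
  · exact absurd htri (not_le.2 (ha j hj l hl hne hV))
  · rcases lt_or_gt_of_ne (hclass j l hV) with h | h
    · have := hb j hj l hl hV h
      linarith
    · have := hb l hl j hj (Ne.symm hV) h
      rw [dist_comm] at this
      linarith
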